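/- Let A₁, A₂, A₃, B₁, B₂, B₃ be six points in Schönhardt position and let x be a point beyond the facet (A₁,A₂,A₃) of their convex hull. If x lies strictly inside the triangular visibility cone bounded by the planes B₁B₂A₂, B₂B₃A₃, B₃B₁A₁, then the tetrahedron conv{x, B₁, B₂, B₃} intersects none of the segments (B_i, A_{i+1}) in their relative interiors. -/

import Mathlib

/-- Homogenized 4×4 determinant of four points of ℝ³ (columns `(p,1)`). Its sign is the
orientation of the simplex on the four points. -/
def det4 (w x y z : Fin 3 → ℝ) : ℝ :=
  Matrix.det (Matrix.of
    ![![w 0, x 0, y 0, z 0], ![w 1, x 1, y 1, z 1], ![w 2, x 2, y 2, z 2], ![1, 1, 1, 1]])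

/-- The centroid of the six points of a Schönhardt configuration (an interior reference
point). -/
noncomputable def schCentroid (A B : Fin 3 → Fin 3 → ℝ) : Fin 3 → ℝ :=
  (6 : ℝ)⁻¹ • (A 0 + A 1 + A 2 + B 0 + B 1 + B 2)

/-- Six points in Schönhardt position (local convexity at each edge of the eight facets,
reflex exactly at the three diagonals `(Bᵢ, Aᵢ₊₁)`); see STATEMENT 18. -/
def SchonhardtPosition (A B : Fin 3 → Fin 3 → ℝ) : Prop :=
  (∀ i : Fin 3,
      0 < det4 (A 0) (A 1) (A 2) (B i) * det4 (A 0) (A 1) (A 2) (schCentroid A B)) ∧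
  (∀ i : Fin 3,
      0 < det4 (B 0) (B 1) (B 2) (A (i + 1)) * det4 (B 0) (B 1) (B 2) (schCentroid A B)) ∧
  (∀ i : Fin 3,
      0 < det4 (A i) (B i) (A (i + 1)) (B (i + 2)) *
            det4 (A i) (B i) (A (i + 1)) (schCentroid A B)) ∧
  (∀ i : Fin 3,
      det4 (A i) (B i) (A (i + 1)) (B (i + 1)) *
        det4 (A i) (B i) (A (i + 1)) (schCentroid A B) < 0)

lemma det4_expand (w x y z : Fin 3 → ℝ) : det4 w x y z =
    w 0 * (x 1 * (y 2 - z 2) - y 1 * (x 2 - z 2) + z 1 * (x 2 - y 2))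
  - x 0 * (w 1 * (y 2 - z 2) - y 1 * (w 2 - z 2) + z 1 * (w 2 - y 2))
  + y 0 * (w 1 * (x 2 - z 2) - x 1 * (w 2 - z 2) + z 1 * (w 2 - x 2))
  - z 0 * (w 1 * (x 2 - y 2) - x 1 * (w 2 - y 2) + y 1 * (w 2 - x 2)) := by
  have h1 : Fin.succAbove (1 : Fin 4) (2 : Fin 3) = 3 := by decide
  have h2 : Fin.succAbove (2 : Fin 4) (2 : Fin 3) = 3 := by decide
  have h3 : Fin.succAbove (3 : Fin 4) (2 : Fin 3) = 2 := by decide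
  simp [det4, Matrix.det_succ_row_zero, Fin.sum_univ_succ, Fin.succAbove_zero,
    Fin.succ_succAbove_zero, Fin.succ_succAbove_succ, Fin.succAbove_succ_self, h1, h2, h3]
  ring

lemma key (P Q R S x : Fin 3 → ℝ)
    (hc : 0 < det4 P Q R x * det4 P Q R S) :
    convexHull ℝ ({x, P, Q, S} : Set (Fin 3 → ℝ)) ∩ openSegment ℝ P R = ∅ := by
  rw [Set.eq_empty_iff_forall_notMem]
  rintro p ⟨hp, hseg⟩
  have hx0 : det4 P Q R x ≠ 0 := by
    intro h0; rw [h0, zero_mul] at hc; exact lt_irrefl 0 hc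
  -- unpack convex hull membership
  rw [show ({x, P, Q, S} : Set (Fin 3 → ℝ)) = insert x {P, Q, S} from rfl,
    convexHull_insert ⟨P, by simp⟩] at hp
  rw [convexJoin_singleton_left] at hp
  obtain ⟨q, hq, hpq⟩ := Set.mem_iUnion₂.mp hp
  rw [show ({P, Q, S} : Set (Fin 3 → ℝ)) = insert P {Q, S} from rfl,
    convexHull_insert ⟨Q, by simp⟩] at hq
  rw [convexJoin_singleton_left] at hq
  obtain ⟨r, hr, hqr⟩ := Set.mem_iUnion₂.mp hq
  rw [convexHull_pair] at hr
  obtain ⟨c, c', hcp, hcp', hcc, hr⟩ := hr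
  obtain ⟨b, b', hbp, hbp', hbb, hqr⟩ := hqr
  obtain ⟨a, a', hap, hap', haa, hpq⟩ := hpq
  obtain ⟨s, t, hs, ht, hst, hseg⟩ := hseg
  subst hr; subst hqr; subst hpq
  -- evaluate the affine functional det4 P Q R · at p, two ways
  have hfp : det4 P Q R (a • x + a' • (b • P + b' • (c • Q + c' • S))) =
      a * det4 P Q R x + (a' * b' * c') * det4 P Q R S := by
    have e1 : a' = 1 - a := by linarith
    have e2 : b' = 1 - b := by linarith
    have e3 : c' = 1 - c := by linarith
    subst e1; subst e2; subst e3
    simp only [det4_expand, Pi.add_apply, Pi.smul_apply, smul_eq_mul]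
    ring
  have hfp0 : det4 P Q R (s • P + t • R) = 0 := by
    have e : t = 1 - s := by linarith
    subst e
    simp only [det4_expand, Pi.add_apply, Pi.smul_apply, smul_eq_mul]
    ring
  rw [← hseg] at hfp
  rw [hfp0] at hfp
  have heq : a * det4 P Q R x + (a' * b' * c') * det4 P Q R S = 0 := hfp.symm
  -- sign analysis: a = 0 and a' * b' * c' = 0
  have habc : a * det4 P Q R x = 0 ∧ (a' * b' * c') * det4 P Q R S = 0 := by
    rcases mul_pos_iff.mp hc with ⟨h1, h2⟩ | ⟨h1, h2⟩
    · have n1 : 0 ≤ a * det4 P Q R x := mul_nonneg hap h1.le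
      have n2 : 0 ≤ (a' * b' * c') * det4 P Q R S :=
        mul_nonneg (mul_nonneg (mul_nonneg hap' hbp') hcp') h2.le
      constructor <;> linarith
    · have n1 : a * det4 P Q R x ≤ 0 := mul_nonpos_of_nonneg_of_nonpos hap h1.le
      have n2 : (a' * b' * c') * det4 P Q R S ≤ 0 :=
        mul_nonpos_of_nonneg_of_nonpos (mul_nonneg (mul_nonneg hap' hbp') hcp') h2.le
      constructor <;> linarith
  have ha0 : a = 0 := by
    rcases mul_eq_zero.mp habc.1 with h | h
    · exact h
    · exact absurd h hx0
  have ha1 : a' = 1 := by linarith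
  have hS0 : det4 P Q R S ≠ 0 := by
    intro h0; rw [h0, mul_zero] at hc; exact lt_irrefl 0 hc
  have hbc : b' * c' = 0 := by
    have h := (mul_eq_zero.mp habc.2).resolve_right hS0
    rw [ha1, one_mul] at h
    exact h
  -- so p lies in the segment spanned by P and Q; hence R is affine combo of P, Q
  have hR : ∀ j, t * R j = (b - s) * P j + (b' * c) * Q j := by
    intro j
    have h3 := congrFun hseg j
    simp only [Pi.add_apply, Pi.smul_apply, smul_eq_mul] at h3
    rw [ha0, ha1] at h3
    linear_combination h3 + S j * hbc
  have hsum : (b - s) + b' * c = t := by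
    linear_combination hbb + b' * hcc - hst - hbc
  have hfx : det4 P Q R x = 0 := by
    have hRfun : R = fun j => ((b - s) / t) * P j + ((b' * c) / t) * Q j := by
      funext j
      rw [eq_comm, div_mul_eq_mul_div, div_mul_eq_mul_div, ← add_div,
        div_eq_iff (ne_of_gt ht)]
      linear_combination -(hR j)
    have hβ : (b' * c) / t = 1 - (b - s) / t := by
      field_simp
      linarith [hsum]
    rw [hRfun]
    simp only [det4_expand, hβ]
    ring
  exact hx0 hfx

/-- Let `A, B` be in Schönhardt position and let `x` be a point beyond the
facet `(A₁,A₂,A₃)` of their convex hull (strictly outside the plane of `(A₁,A₂,A₃)` and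
strictly on the interior side of every other facet plane).  If `x` lies strictly inside the
visibility cone bounded by the planes `BᵢBᵢ₊₁Aᵢ₊₁` (on the same side as `Bᵢ₊₂` for each),
then the tetrahedron `conv{x, B₁, B₂, B₃}` meets none of the diagonals `(Bᵢ, Aᵢ₊₁)` in their
relative interiors. -/
theorem stmt19 (A B : Fin 3 → Fin 3 → ℝ) (h : SchonhardtPosition A B)
    (x : Fin 3 → ℝ)
    (hbot : det4 (A 0) (A 1) (A 2) x * det4 (A 0) (A 1) (A 2) (schCentroid A B) < 0)
    (htop : 0 < det4 (B 0) (B 1) (B 2) x * det4 (B 0) (B 1) (B 2) (schCentroid A B))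
    (hside1 : ∀ i : Fin 3,
      0 < det4 (A i) (B i) (A (i + 1)) x * det4 (A i) (B i) (A (i + 1)) (schCentroid A B))
    (hside2 : ∀ i : Fin 3,
      0 < det4 (B i) (A (i + 1)) (B (i + 1)) x *
            det4 (B i) (A (i + 1)) (B (i + 1)) (schCentroid A B))
    (hcone : ∀ i : Fin 3,
      0 < det4 (B i) (B (i + 1)) (A (i + 1)) x *
            det4 (B i) (B (i + 1)) (A (i + 1)) (B (i + 2))) :
    ∀ i : Fin 3,
      convexHull ℝ ({x, B 0, B 1, B 2} : Set (Fin 3 → ℝ)) ∩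
        openSegment ℝ (B i) (A (i + 1)) = ∅ := by
  intro i
  fin_cases i
  · exact key (B 0) (B 1) (A 1) (B 2) x (hcone 0)
  · have e := key (B 1) (B 2) (A 2) (B 0) x (hcone 1)
    have hset : ({x, B 0, B 1, B 2} : Set (Fin 3 → ℝ)) = {x, B 1, B 2, B 0} := by
      ext y; simp; tauto
    rw [hset]; exact e
  · have e := key (B 2) (B 0) (A 0) (B 1) x (hcone 2)
    have hset : ({x, B 0, B 1, B 2} : Set (Fin 3 → ℝ)) = {x, B 2, B 0, B 1} := by
      ext y; simp; tauto
    rw [hset]; exact e
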